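/- Let ω = e^{2πi/3}, Λ = ℤω ⊕ ℤ, ⟨z,w⟩ := Re(z·conj(w)), K = 4π/3 and z_S = i/√3. Suppose v : ℂ → ℂ satisfies v(z+γ) = e^{2i⟨γ,K⟩}v(z) for all γ ∈ Λ and all z ∈ ℂ, and v(ωz) = v(z) for all z ∈ ℂ. Then v(z_S) = 0 and v(−z_S) = 0. -/

import Mathlib

open Complex

noncomputable section

/-- `ω = e^{2πi/3}`. -/
def ω : ℂ := Complex.exp (2 * (Real.pi : ℂ) * Complex.I / 3)

/-- The hexagonal lattice `Λ = ℤω ⊕ ℤ`. -/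
def inΛ (γ : ℂ) : Prop := ∃ m n : ℤ, γ = (m : ℂ) * ω + (n : ℂ)

/-- The pairing `⟨z,w⟩ = Re (z ⬝ conj w)`. -/
def pairing (z w : ℂ) : ℝ := (z * (starRingEnd ℂ) w).re

/-- The Dirac momentum `K = 4π/3`. -/
def Kpt : ℂ := 4 * (Real.pi : ℂ) / 3

/-- The stacking point `z_S = i/√3`. -/
def zS : ℂ := Complex.I / (Real.sqrt 3 : ℂ)

lemma hω_eq : ω = -(1/2) + ((Real.sqrt 3 / 2 : ℝ) : ℂ) * Complex.I := by
  rw [ω]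
  have h : (2 * (Real.pi:ℂ) * Complex.I / 3) = ((2*Real.pi/3 : ℝ):ℂ) * Complex.I := by
    push_cast; ring
  rw [h, Complex.exp_mul_I, ← Complex.ofReal_cos, ← Complex.ofReal_sin]
  have hc : Real.cos (2*Real.pi/3) = -(1/2) := by
    have h2 : (2*Real.pi/3) = Real.pi - Real.pi/3 := by ring
    rw [h2, Real.cos_pi_sub, Real.cos_pi_div_three]
  have hs : Real.sin (2*Real.pi/3) = Real.sqrt 3 / 2 := by
    have h2 : (2*Real.pi/3) = Real.pi - Real.pi/3 := by ring
    rw [h2, Real.sin_pi_sub, Real.sin_pi_div_three]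
  rw [hc, hs]; push_cast; ring

theorem stmt1 (v : ℂ → ℂ)
    (hv1 : ∀ γ : ℂ, inΛ γ → ∀ z : ℂ,
      v (z + γ) = Complex.exp (2 * Complex.I * (pairing γ Kpt : ℂ)) * v z)
    (hv2 : ∀ z : ℂ, v (ω * z) = v z) :
    v zS = 0 ∧ v (-zS) = 0 := by
  have h3 : (Real.sqrt 3 : ℂ) ≠ 0 := by
    exact_mod_cast Real.sqrt_ne_zero'.mpr (by norm_num)
  have hsq : (Real.sqrt 3 : ℂ) * (Real.sqrt 3 : ℂ) = 3 := by
    exact_mod_cast Real.mul_self_sqrt (by norm_num : (0:ℝ) ≤ 3)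
  have hmem1 : inΛ (-1 - ω) := ⟨-1, -1, by push_cast; ring⟩
  have hmem2 : inΛ (1 + ω) := ⟨1, 1, by push_cast; ring⟩
  have hz1 : ω * zS = zS + (-1 - ω) := by
    rw [hω_eq, zS]
    field_simp
    push_cast
    linear_combination Complex.I * hsq + (Real.sqrt 3:ℂ) * Complex.I_sq
  have hz2 : ω * (-zS) = -zS + (1 + ω) := by
    rw [hω_eq, zS]
    field_simp
    push_cast
    linear_combination (-Complex.I) * hsq - (Real.sqrt 3:ℂ) * Complex.I_sq
  have hK : Kpt = ((4*Real.pi/3 : ℝ):ℂ) := by rw [Kpt]; push_cast; ring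
  have hp1 : pairing (-1 - ω) Kpt = -(2*Real.pi/3) := by
    rw [pairing, hK, Complex.conj_ofReal, hω_eq]
    simp [Complex.mul_re, Complex.add_re, Complex.add_im, Complex.ofReal_re, Complex.ofReal_im]
    ring
  have hp2 : pairing (1 + ω) Kpt = 2*Real.pi/3 := by
    rw [pairing, hK, Complex.conj_ofReal, hω_eq]
    simp [Complex.mul_re, Complex.add_re, Complex.add_im, Complex.ofReal_re, Complex.ofReal_im]
    ring
  have key : ∀ (r : ℝ), (∀ n : ℤ, r ≠ n * Real.pi) →
      Complex.exp (2 * Complex.I * ((r:ℝ):ℂ)) ≠ 1 := by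
    intro r hr h
    rw [Complex.exp_eq_one_iff] at h
    obtain ⟨n, hn⟩ := h
    have him := congrArg Complex.im hn
    simp [Complex.mul_im, Complex.mul_re] at him
    exact hr n (by linarith)
  have hne1 : Complex.exp (2 * Complex.I * ((pairing (-1-ω) Kpt : ℝ):ℂ)) ≠ 1 := by
    rw [hp1]
    apply key
    intro n h
    have h2 : (-2 : ℝ) * Real.pi = (3 * n) * Real.pi := by linarith
    have h3' := mul_right_cancel₀ Real.pi_ne_zero h2
    have : (-2 : ℤ) = 3 * n := by exact_mod_cast h3'
    omega
  have hne2 : Complex.exp (2 * Complex.I * ((pairing (1+ω) Kpt : ℝ):ℂ)) ≠ 1 := by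
    rw [hp2]
    apply key
    intro n h
    have h2 : (2 : ℝ) * Real.pi = (3 * n) * Real.pi := by linarith
    have h3' := mul_right_cancel₀ Real.pi_ne_zero h2
    have : (2 : ℤ) = 3 * n := by exact_mod_cast h3'
    omega
  constructor
  · have e1 : v zS = Complex.exp (2 * Complex.I * ((pairing (-1-ω) Kpt : ℝ):ℂ)) * v zS := by
      calc v zS = v (ω * zS) := (hv2 zS).symm
        _ = v (zS + (-1 - ω)) := by rw [hz1]
        _ = _ := hv1 _ hmem1 zS
    have h0 : (1 - Complex.exp (2 * Complex.I * ((pairing (-1-ω) Kpt : ℝ):ℂ))) * v zS = 0 := by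
      linear_combination e1
    rcases mul_eq_zero.mp h0 with h | h
    · exact absurd (by linear_combination -h) hne1
    · exact h
  · have e2 : v (-zS) = Complex.exp (2 * Complex.I * ((pairing (1+ω) Kpt : ℝ):ℂ)) * v (-zS) := by
      calc v (-zS) = v (ω * (-zS)) := (hv2 (-zS)).symm
        _ = v (-zS + (1 + ω)) := by rw [hz2]
        _ = _ := hv1 _ hmem2 (-zS)
    have h0 : (1 - Complex.exp (2 * Complex.I * ((pairing (1+ω) Kpt : ℝ):ℂ))) * v (-zS) = 0 := by
      linear_combination e2
    rcases mul_eq_zero.mp h0 with h | h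
    · exact absurd (by linear_combination -h) hne2
    · exact h

end
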